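/- Let α be an irrational real number with 0 < α < 1/2, let k ≥ 2, and let m be a positive integer with ‖mα‖ ≥ ‖q_{k−1}α‖ + (a_{k+1} + 1)·‖q_kα‖. Then every factor of slope α that is an abelian power of period m and exponent e satisfies e < q_k − 1. -/

import Mathlib

open scoped Classical

noncomputable section

namespace SturmianAbelian

/-- Complete quotients: `cq α t = α_t` for `t ≥ 1`; `cq α 0 = α` is a dummy value chosen so that
`cq α 1 = 1/(α - ⌊α⌋) = 1/α` when `0 < α < 1`. -/
noncomputable def cq (α : ℝ) : ℕ → ℝ
  | 0 => α
  | t + 1 => (cq α t - ⌊cq α t⌋)⁻¹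

/-- Partial quotients: `pq α t = a_t = ⌊α_t⌋` for `t ≥ 1`. -/
noncomputable def pq (α : ℝ) (t : ℕ) : ℕ := (⌊cq α t⌋).toNat

/-- Denominators of the convergents of `α`: `qd α k = q_k`, with
`q_0 = 1`, `q_1 = a_1`, `q_k = a_k q_{k-1} + q_{k-2}`. -/
noncomputable def qd (α : ℝ) : ℕ → ℕ
  | 0 => 1
  | 1 => pq α 1
  | (k + 2) => pq α (k + 2) * qd α (k + 1) + qd α k

/-- Distance from `x` to the nearest integer, `‖x‖`. -/
noncomputable def nint (x : ℝ) : ℝ := min (Int.fract x) (1 - Int.fract x)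

/-- The representative of `x` modulo 1 lying in `(0, 1]`. -/
noncomputable def fract' (x : ℝ) : ℝ := 1 - Int.fract (-x)

/-- The Sturmian word of slope `α` and intercept `ρ` in the lower convention:
`s n = 1` iff the fractional part of `ρ + nα` lies in `[1 - α, 1)`. -/
noncomputable def lowerWord (α ρ : ℝ) (n : ℕ) : Bool :=
  if 1 - α ≤ Int.fract (ρ + (n : ℝ) * α) then true else false

/-- The Sturmian word of slope `α` and intercept `ρ` in the upper convention:
`s n = 1` iff the representative of `ρ + nα` modulo 1 in `(0,1]` lies in `(1 - α, 1]`. -/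
noncomputable def upperWord (α ρ : ℝ) (n : ℕ) : Bool :=
  if 1 - α < fract' (ρ + (n : ℝ) * α) then true else false

/-- `s` is a Sturmian word of slope `α` (either convention, some intercept `ρ ∈ [0,1)`). -/
def IsSturmian (α : ℝ) (s : ℕ → Bool) : Prop :=
  ∃ ρ : ℝ, 0 ≤ ρ ∧ ρ < 1 ∧ (s = lowerWord α ρ ∨ s = upperWord α ρ)

/-- `w` is a (finite, contiguous) factor of the infinite word `s`. -/
def FactorOf (s : ℕ → Bool) (w : List Bool) : Prop :=
  ∃ i : ℕ, w = (List.range w.length).map fun j => s (i + j)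

/-- `w` is a factor of slope `α`. -/
def IsFactor (α : ℝ) (w : List Bool) : Prop :=
  ∃ s : ℕ → Bool, IsSturmian α s ∧ FactorOf s w

/-- Abelian equivalence: same length and the same number of occurrences of the letter 1. -/
def AbEq (u v : List Bool) : Prop :=
  u.length = v.length ∧ u.count true = v.count true

/-- `u` is an abelian power of period `m` and exponent `e`: a concatenation of `e ≥ 2` pairwise
abelian equivalent blocks, each of length `m ≥ 1`. -/
def IsAbelianPower (m e : ℕ) (u : List Bool) : Prop :=
  1 ≤ m ∧ 2 ≤ e ∧ u.length = e * m ∧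
  ∀ i < e, ∀ j < e, AbEq ((u.drop (i * m)).take m) ((u.drop (j * m)).take m)

/-- `w` has abelian period `m`: `w` is a contiguous factor of some abelian power of period `m`. -/
def HasAbPeriod (w : List Bool) (m : ℕ) : Prop :=
  ∃ e u, IsAbelianPower m e u ∧ w <:+: u

/-- `m` is the minimum abelian period of `w`. -/
def MinAbPeriod (w : List Bool) (m : ℕ) : Prop :=
  IsLeast {p : ℕ | HasAbPeriod w p} m

/-- `M(α) = {t·q_k : k ≥ 0, 1 ≤ t ≤ a_{k+1}}`. -/
def Mset (α : ℝ) : Set ℕ :=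
  {m | ∃ k t : ℕ, 1 ≤ t ∧ t ≤ pq α (k + 1) ∧ m = t * qd α k}

/-- The set of denominators of convergents and semiconvergents of `α`. -/
def Qsc (α : ℝ) : Set ℕ :=
  {m | (∃ k : ℕ, m = qd α k) ∨
    ∃ k l : ℕ, 1 ≤ k ∧ 1 ≤ l ∧ l < pq α (k + 1) ∧ m = l * qd α k + qd α (k - 1)}

/-- The singular factor of length `q_k`: the unique factor of slope `α` of length `q_k` that is not
abelian equivalent to any other factor of slope `α` of the same length. -/
def IsSingular (α : ℝ) (k : ℕ) (s : List Bool) : Prop :=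
  IsFactor α s ∧ s.length = qd α k ∧
  ∀ u : List Bool, IsFactor α u → u.length = qd α k → u ≠ s → ¬ AbEq u s

/-- `v` occurs in `u` at position `i`. -/
def OccursAt (v u : List Bool) (i : ℕ) : Prop :=
  i + v.length ≤ u.length ∧ (u.drop i).take v.length = v

/-- `u` is a complete first return to `v`: `v` is a prefix and a suffix of `u` and `v` has exactly
two occurrences in `u`. -/
def CompleteFirstReturn (v u : List Bool) : Prop :=
  v <+: u ∧ v <:+ u ∧ {i | OccursAt v u i}.ncard = 2

/-- `u` is a complete first return to `v` in the same phase. -/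
def CFRSamePhase (v u : List Bool) : Prop :=
  v <+: u ∧ v <:+ u ∧ u.length % v.length = 0 ∧
  2 ≤ {i | OccursAt v u i}.ncard ∧
  ∀ i : ℕ, OccursAt v u i → i % v.length = 0 → i = 0 ∨ i = u.length - v.length

lemma irr_inv {x : ℝ} (h : Irrational x) : Irrational x⁻¹ := by
  rintro ⟨q, hq⟩
  rcases eq_or_ne q 0 with rfl | hq0
  · simp at hq
    exact h.ne_zero (by simpa [inv_eq_zero] using hq.symm)
  · exact h ⟨q⁻¹, by push_cast; rw [hq]; simp⟩

lemma cq_succ (α : ℝ) (t : ℕ) : cq α (t + 1) = (Int.fract (cq α t))⁻¹ := by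
  rw [cq, Int.fract]

lemma cq_irr {α : ℝ} (h : Irrational α) : ∀ t, Irrational (cq α t) := by
  intro t
  induction t with
  | zero => exact h
  | succ t ih =>
    rw [cq_succ]
    exact irr_inv (by rw [Int.fract]; exact ih.sub_intCast ⌊cq α t⌋)

lemma fract_pos_irr {x : ℝ} (h : Irrational x) : 0 < Int.fract x := by
  rcases lt_or_eq_of_le (Int.fract_nonneg x) with h' | h'
  · exact h'
  · exact absurd (by linarith [Int.self_sub_floor x] : x = (⌊x⌋ : ℝ)) (h.ne_int ⌊x⌋)

variable {α : ℝ}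

lemma fract_lt_one' (x : ℝ) : Int.fract x < 1 := Int.fract_lt_one x

lemma cq_gt_one (h : Irrational α) (t : ℕ) : 1 < cq α (t + 1) := by
  rw [cq_succ]
  rw [lt_inv_comm₀ (by norm_num) (fract_pos_irr (cq_irr h t))]
  simpa using Int.fract_lt_one (cq α t)

lemma pq_cast (h : Irrational α) (t : ℕ) : (pq α (t + 1) : ℝ) = (⌊cq α (t + 1)⌋ : ℤ) := by
  have h1 : (1 : ℤ) ≤ ⌊cq α (t + 1)⌋ := by
    rw [Int.le_floor]; exact_mod_cast (cq_gt_one h t).le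
  rw [pq]
  exact_mod_cast congrArg (Int.cast : ℤ → ℝ) (Int.toNat_of_nonneg (by linarith))

lemma pq_pos (h : Irrational α) (t : ℕ) : 1 ≤ pq α (t + 1) := by
  have h1 : (1 : ℤ) ≤ ⌊cq α (t + 1)⌋ := by
    rw [Int.le_floor]; exact_mod_cast (cq_gt_one h t).le
  rw [pq]; omega


noncomputable def bb (α : ℝ) : ℕ → ℝ
  | 0 => 1
  | t + 1 => Int.fract (cq α t) * bb α t

lemma bb_pos (h : Irrational α) (t : ℕ) : 0 < bb α t := by
  induction t with
  | zero => norm_num [bb]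
  | succ t ih => exact mul_pos (fract_pos_irr (cq_irr h t)) ih

lemma bb_lt (h : Irrational α) (t : ℕ) : bb α (t + 1) < bb α t := by
  rw [bb]
  nlinarith [fract_pos_irr (cq_irr h t), Int.fract_lt_one (cq α t), bb_pos h t]

lemma bb_one (h0 : 0 < α) (h1 : α < 1) : bb α 1 = α := by
  have : Int.fract α = α := Int.fract_eq_self.2 ⟨h0.le, h1⟩
  simp [bb, cq, this]

lemma cq_mul_bb (h : Irrational α) (t : ℕ) : cq α (t + 1) * bb α (t + 1) = bb α t := by
  rw [cq_succ, bb, inv_mul_cancel_left₀ (ne_of_gt (fract_pos_irr (cq_irr h t)))]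

lemma bb_rec (h : Irrational α) (t : ℕ) :
    bb α (t + 2) = bb α t - (pq α (t + 1) : ℝ) * bb α (t + 1) := by
  have h1 : bb α (t + 2) = Int.fract (cq α (t + 1)) * bb α (t + 1) := rfl
  rw [h1, Int.fract, pq_cast h t, sub_mul, cq_mul_bb h t]

lemma qd_two_step (t : ℕ) : qd α (t + 2) = pq α (t + 2) * qd α (t + 1) + qd α t := rfl

lemma qd_pos (h : Irrational α) (t : ℕ) : 1 ≤ qd α t := by
  induction t using Nat.strong_induction_on with
  | _ t ih =>
    match t with
    | 0 => exact le_refl 1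
    | 1 => exact pq_pos h 0
    | (t + 2) =>
      rw [qd_two_step]
      have := ih t (by omega)
      nlinarith [pq_pos h (t + 1), ih (t + 1) (by omega)]

lemma qd_succ_ge (h : Irrational α) (h2 : α < 1 / 2) (h0 : 0 < α) (t : ℕ) :
    qd α t + 1 ≤ qd α (t + 1) := by
  match t with
  | 0 =>
    show 1 + 1 ≤ pq α 1
    have hc0 : cq α 0 = α := rfl
    have hc : cq α 1 = α⁻¹ := by
      rw [cq_succ, hc0, Int.fract_eq_self.2 ⟨h0.le, by linarith⟩]
    have : (2 : ℝ) ≤ cq α 1 := by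
      rw [hc, show (2:ℝ) = (1/2 : ℝ)⁻¹ by norm_num]
      exact inv_anti₀ h0 h2.le
    have : (2 : ℤ) ≤ ⌊cq α 1⌋ := by rw [Int.le_floor]; exact_mod_cast this
    rw [pq]; omega
  | (t + 1) =>
    rw [qd_two_step]
    nlinarith [pq_pos h (t + 1), qd_pos h t, qd_pos h (t + 1)]

-- numerators
noncomputable def pn (α : ℝ) : ℕ → ℤ
  | 0 => 0
  | 1 => 1
  | (k + 2) => pq α (k + 2) * pn α (k + 1) + pn α k

lemma key (h : Irrational α) (h0 : 0 < α) (h1 : α < 1) : ∀ k : ℕ,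
    (qd α k : ℝ) * α - (pn α k : ℝ) = (-1) ^ k * bb α (k + 1) := by
  have base0 : (qd α 0 : ℝ) * α - (pn α 0 : ℝ) = (-1) ^ 0 * bb α 1 := by
    simp [qd, pn, bb_one h0 h1]
  have base1 : (qd α 1 : ℝ) * α - (pn α 1 : ℝ) = (-1) ^ 1 * bb α 2 := by
    have hb2 : bb α 2 = bb α 0 - (pq α 1 : ℝ) * bb α 1 := bb_rec h 0
    have : (qd α 1 : ℝ) = (pq α 1 : ℝ) := by norm_cast
    rw [this, hb2, bb_one h0 h1]
    simp only [pn, bb]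
    push_cast
    ring
  intro k
  induction k using Nat.strong_induction_on with
  | _ k ih =>
    match k with
    | 0 => exact base0
    | 1 => exact base1
    | (k + 2) =>
      have i1 := ih (k + 1) (by omega)
      have i0 := ih k (by omega)
      have hq : (qd α (k + 2) : ℝ) = (pq α (k + 2) : ℝ) * qd α (k + 1) + qd α k := by
        rw [qd_two_step]; push_cast; ring
      have hp : (pn α (k + 2) : ℝ) = (pq α (k + 2) : ℝ) * pn α (k + 1) + pn α k := by
        rw [show pn α (k+2) = pq α (k + 2) * pn α (k + 1) + pn α k from rfl]; push_cast; ring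
      have hb : bb α (k + 3) = bb α (k + 1) - (pq α (k + 2) : ℝ) * bb α (k + 2) := bb_rec h (k + 1)
      rw [hq, hp, hb]
      have : (-1 : ℝ) ^ (k + 2) = (-1) ^ k := by ring
      rw [this]
      linear_combination ((pq α (k + 2)) : ℝ) * i1 + i0


lemma identity (h : Irrational α) (h0 : 0 < α) (h1 : α < 1) (k : ℕ) :
    (qd α (k + 1) : ℝ) * bb α (k + 1) + (qd α k : ℝ) * bb α (k + 2) = 1 := by
  induction k with
  | zero =>
    have hb2 : bb α 2 = bb α 0 - (pq α 1 : ℝ) * bb α 1 := bb_rec h 0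
    have hq1 : (qd α 1 : ℝ) = (pq α 1 : ℝ) := by norm_cast
    rw [hb2, hq1, bb_one h0 h1]
    simp only [show qd α 0 = 1 from rfl, show bb α 0 = (1:ℝ) from rfl, Nat.cast_one]
    ring
  | succ k ih =>
    have hb : bb α (k + 3) = bb α (k + 1) - (pq α (k + 2) : ℝ) * bb α (k + 2) := bb_rec h (k + 1)
    have hq : (qd α (k + 2) : ℝ) = (pq α (k + 2) : ℝ) * qd α (k + 1) + qd α k := by
      rw [qd_two_step]; push_cast; ring
    rw [hb, hq]
    linear_combination ih

lemma bb_le_one (h : Irrational α) (h0 : 0 < α) (h1 : α < 1) (k : ℕ) : bb α (k + 1) ≤ α := by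
  induction k with
  | zero => rw [bb_one h0 h1]
  | succ k ih => exact le_trans (bb_lt h (k + 1)).le ih

lemma nint_eq_abs {x : ℝ} {p : ℤ} (hp : |x - p| < 1/2) : nint x = |x - p| := by
  rcases le_or_gt 0 (x - p) with hs | hs
  · have h1 : x - p < 1 := by rw [abs_of_nonneg hs] at hp; linarith
    have hf : Int.fract x = x - p := by
      rw [← Int.fract_sub_intCast x p, Int.fract_eq_self.2 ⟨hs, h1⟩]
    rw [nint, hf, abs_of_nonneg hs]
    rw [abs_of_nonneg hs] at hp
    rw [min_eq_left (by linarith)]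
  · have hpn : -(1/2 : ℝ) < x - p := (abs_lt.1 hp).1
    have hf : Int.fract x = x - p + 1 := by
      rw [show x - (p:ℝ) + 1 = x - (p - 1 : ℤ) by push_cast; ring]
      rw [← Int.fract_sub_intCast x (p - 1), Int.fract_eq_self.2 ⟨by push_cast; linarith, by push_cast; linarith⟩]
    rw [nint, hf, abs_of_neg hs]
    rw [abs_of_neg hs] at hp
    rw [min_eq_right (by linarith)]
    ring

lemma nint_qd (h : Irrational α) (h0 : 0 < α) (h2 : α < 1/2) (k : ℕ) :
    nint ((qd α k : ℝ) * α) = bb α (k + 1) := by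
  have hkey := key h h0 (by linarith) k
  have hb0 : 0 < bb α (k + 1) := bb_pos h (k + 1)
  have hbh : bb α (k + 1) < 1 / 2 := lt_of_le_of_lt (bb_le_one h h0 (by linarith) k) h2
  have habs : |(qd α k : ℝ) * α - (pn α k : ℝ)| = bb α (k + 1) := by
    rw [hkey, abs_mul, abs_pow, abs_neg, abs_one, one_pow, one_mul, abs_of_pos hb0]
  rw [nint_eq_abs (by rw [habs]; exact hbh), habs]


lemma qd_ge_three (h : Irrational α) (h0 : 0 < α) (h2 : α < 1/2) (j : ℕ) :
    3 ≤ qd α (j + 2) := by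
  induction j with
  | zero =>
    have h1 := qd_succ_ge h h2 h0 0
    have h2' := qd_succ_ge h h2 h0 1
    have e0 : qd α 0 = 1 := rfl
    have e1 : qd α (0 + 1) = qd α 1 := rfl
    have e2 : qd α (1 + 1) = qd α (0 + 2) := rfl
    omega
  | succ j ih =>
    have := qd_succ_ge h h2 h0 (j + 2)
    have e1 : qd α (j + 2 + 1) = qd α (j + 1 + 2) := rfl
    omega

lemma bound (h : Irrational α) (h0 : 0 < α) (h2 : α < 1/2) (k : ℕ) (hk : 2 ≤ k) :
    1 ≤ ((qd α k : ℝ) - 1) * (bb α k + ((pq α (k + 1) : ℝ) + 1) * bb α (k + 1)) := by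
  obtain ⟨j, rfl⟩ : ∃ j, k = j + 2 := ⟨k - 2, by omega⟩
  have h1 : α < 1 := by linarith
  have hid := identity h h0 h1 (j + 1)
  have hrec := bb_rec h (j + 2)
  have hy : 0 < bb α (j + 3) := bb_pos h (j + 3)
  have hz : 0 < bb α (j + 4) := bb_pos h (j + 4)
  have hzy : bb α (j + 4) < bb α (j + 3) := bb_lt h (j + 3)
  have hQ3 : (3 : ℝ) ≤ (qd α (j + 2) : ℝ) := by exact_mod_cast qd_ge_three h h0 h2 j
  have hPQ : (qd α (j + 1) : ℝ) + 1 ≤ (qd α (j + 2) : ℝ) := by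
    exact_mod_cast qd_succ_ge h h2 h0 (j + 1)
  have ha : (1 : ℝ) ≤ (pq α (j + 3) : ℝ) := by exact_mod_cast pq_pos h (j + 2)
  have hC : (1 : ℝ) ≤ ((qd α (j + 2) : ℝ) - 1) * ((pq α (j + 3) : ℝ) + 1)
      - (qd α (j + 1) : ℝ) - (pq α (j + 3) : ℝ) := by nlinarith
  have hbk : bb α (j + 2) = (pq α (j + 3) : ℝ) * bb α (j + 3) + bb α (j + 4) := by
    rw [hrec]; ring
  rw [hbk]
  nlinarith [mul_le_mul_of_nonneg_right hC hy.le]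



/-- Indicator lemma: `⌊y + ε⌋ - ⌊y⌋ = ⌊ε⌋ + [1 - fract ε ≤ fract y]`. -/
lemma floor_step (y ε : ℝ) :
    ⌊y + ε⌋ - ⌊y⌋ = ⌊ε⌋ + (if 1 - Int.fract ε ≤ Int.fract y then 1 else 0) := by
  have hfy := Int.fract_nonneg y
  have hfy1 := Int.fract_lt_one y
  have hfe := Int.fract_nonneg ε
  have hfe1 := Int.fract_lt_one ε
  have h1 : ⌊y + ε⌋ = (⌊y⌋ + ⌊ε⌋) + ⌊Int.fract y + Int.fract ε⌋ := by
    conv_lhs => rw [show y + ε = ((⌊y⌋ + ⌊ε⌋ : ℤ) : ℝ) + (Int.fract y + Int.fract ε) by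
      push_cast; rw [Int.fract, Int.fract]; ring]
    rw [Int.floor_intCast_add]
  rw [h1]
  split
  · next hcond =>
    rw [show ⌊Int.fract y + Int.fract ε⌋ = 1 from Int.floor_eq_iff.2
      (by constructor <;> push_cast <;> [linarith; linarith])]
    ring
  · next hcond =>
    push_neg at hcond
    rw [show ⌊Int.fract y + Int.fract ε⌋ = 0 from Int.floor_eq_iff.2
      (by constructor <;> push_cast <;> [linarith; linarith])]
    ring

/-- fract of a shift by ε only depends on the fract of ε -/
lemma fract_add_eq (x ε : ℝ) : Int.fract (x + ε) = Int.fract (Int.fract x + Int.fract ε) := by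
  rw [show x + ε = (Int.fract x + Int.fract ε) + (⌊x⌋ + ⌊ε⌋ : ℤ) by
    push_cast; rw [Int.fract, Int.fract]; ring]
  rw [Int.fract_add_intCast]

/-- Drift lemma. -/
lemma drift (θ ε : ℝ) (e : ℕ) (he : 1 ≤ e) (c : ℤ)
    (hc : ∀ j < e, ⌊θ + ((j : ℝ) + 1) * ε⌋ - ⌊θ + (j : ℝ) * ε⌋ = c) :
    (e : ℝ) * min (Int.fract ε) (1 - Int.fract ε) < 1 := by
  have hδ0 := Int.fract_nonneg ε
  have hδ1 := Int.fract_lt_one ε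
  have key : ∀ j < e,
      (if 1 - Int.fract ε ≤ Int.fract (θ + (j : ℝ) * ε) then (1:ℤ) else 0) = c - ⌊ε⌋ := by
    intro j hj
    have hthis := hc j hj
    rw [show θ + ((j:ℝ) + 1) * ε = (θ + (j:ℝ) * ε) + ε by ring, floor_step] at hthis
    omega
  have h0 := key 0 (by omega)
  have hcast : ((e - 1 : ℕ) : ℝ) = (e : ℝ) - 1 := by
    have h1 : (1:ℕ) ≤ e := he
    push_cast [h1]
    ring
  rcases le_or_gt (1 - Int.fract ε) (Int.fract θ) with hcase | hcase
  · have hall : ∀ j < e, 1 - Int.fract ε ≤ Int.fract (θ + (j : ℝ) * ε) := by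
      intro j hj
      have hkj := key j hj
      rw [← h0] at hkj
      by_contra hcon
      rw [if_neg hcon, if_pos (by simpa using hcase)] at hkj
      omega
    have hf : ∀ j, j < e → Int.fract (θ + (j : ℝ) * ε)
        = Int.fract θ - j * (1 - Int.fract ε) := by
      intro j
      induction j with
      | zero => simp
      | succ j ih =>
        intro hj
        have hj' : j < e := by omega
        have hprev := ih hj'
        have hge := hall j hj'
        have hL := Int.fract_lt_one (θ + (j:ℝ) * ε)
        rw [show ((j+1:ℕ):ℝ) = (j:ℝ) + 1 by push_cast; ring,
          show θ + ((j:ℝ)+1) * ε = (θ + (j:ℝ) * ε) + ε by ring, fract_add_eq]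
        rw [show Int.fract (θ + (j:ℝ) * ε) + Int.fract ε
            = (Int.fract (θ + (j:ℝ) * ε) + Int.fract ε - 1) + ((1:ℤ):ℝ) by push_cast; ring]
        rw [Int.fract_add_intCast, Int.fract_eq_self.2 ⟨by linarith, by linarith⟩, hprev]
        ring
    have hlast := hall (e - 1) (by omega)
    rw [hf (e - 1) (by omega), hcast] at hlast
    have hfθ := Int.fract_lt_one θ
    have hfin : (e : ℝ) * (1 - Int.fract ε) < 1 := by nlinarith
    calc (e:ℝ) * min (Int.fract ε) (1 - Int.fract ε)
        ≤ (e:ℝ) * (1 - Int.fract ε) :=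
          mul_le_mul_of_nonneg_left (min_le_right _ _) (by positivity)
      _ < 1 := hfin
  · have hall : ∀ j < e, Int.fract (θ + (j : ℝ) * ε) < 1 - Int.fract ε := by
      intro j hj
      have hkj := key j hj
      rw [← h0] at hkj
      by_contra hcon
      push_neg at hcon
      rw [if_pos hcon, if_neg (by simpa using not_le.2 hcase)] at hkj
      omega
    have hf : ∀ j, j < e → Int.fract (θ + (j : ℝ) * ε)
        = Int.fract θ + j * Int.fract ε := by
      intro j
      induction j with
      | zero => simp
      | succ j ih =>
        intro hj
        have hj' : j < e := by omega
        have hprev := ih hj'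
        have hlt := hall j hj'
        have hnn := Int.fract_nonneg (θ + (j:ℝ) * ε)
        rw [show ((j+1:ℕ):ℝ) = (j:ℝ) + 1 by push_cast; ring,
          show θ + ((j:ℝ)+1) * ε = (θ + (j:ℝ) * ε) + ε by ring, fract_add_eq]
        rw [Int.fract_eq_self.2 ⟨by linarith, by linarith⟩, hprev]
        ring
    have hlast := hall (e - 1) (by omega)
    rw [hf (e - 1) (by omega), hcast] at hlast
    have hfθ := Int.fract_nonneg θ
    have hfin : (e : ℝ) * Int.fract ε < 1 := by nlinarith
    calc (e:ℝ) * min (Int.fract ε) (1 - Int.fract ε)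
        ≤ (e:ℝ) * Int.fract ε :=
          mul_le_mul_of_nonneg_left (min_le_left _ _) (by positivity)
      _ < 1 := hfin


lemma window (f : ℕ → Bool) (L a b : ℕ) (h : a + b ≤ L) :
    (((List.range L).map f).drop a).take b = (List.range b).map (fun r => f (a + r)) := by
  apply List.ext_getElem
  · simp
    omega
  · intro n h1 h2
    simp only [List.getElem_take, List.getElem_drop, List.getElem_map, List.getElem_range]

lemma count_lower (α ρ : ℝ) (h0 : 0 < α) (h1 : α < 1) (a m : ℕ) :
    (((List.range m).map fun r => lowerWord α ρ (a + r)).count true : ℤ)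
      = ⌊ρ + ((a : ℝ) + m) * α⌋ - ⌊ρ + (a : ℝ) * α⌋ := by
  have hfα : Int.fract α = α := Int.fract_eq_self.2 ⟨h0.le, h1⟩
  have hflα : ⌊α⌋ = 0 := by
    apply Int.floor_eq_iff.2
    constructor <;> push_cast <;> linarith
  induction m with
  | zero => simp
  | succ m ih =>
    rw [List.range_succ, List.map_append, List.count_append]
    push_cast
    rw [ih]
    have hstep : ⌊(ρ + ((a:ℝ) + m) * α) + α⌋ - ⌊ρ + ((a:ℝ) + m) * α⌋
        = ⌊α⌋ + (if 1 - Int.fract α ≤ Int.fract (ρ + ((a:ℝ) + m) * α) then 1 else 0) :=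
      floor_step _ _
    rw [hflα, hfα] at hstep
    have harg : ρ + ((a:ℝ) + (m + 1)) * α = (ρ + ((a:ℝ) + m) * α) + α := by ring
    rw [harg]
    have hcnt : (([lowerWord α ρ (a + m)].count true : ℤ))
        = (if 1 - α ≤ Int.fract (ρ + ((a:ℝ) + m) * α) then 1 else 0) := by
      rw [lowerWord]
      have hcast : ρ + (((a + m : ℕ)) : ℝ) * α = ρ + ((a:ℝ) + m) * α := by push_cast; ring
      rw [hcast]
      split
    
      · next hco => simp [if_pos hco]
      · next hco => simp [if_neg hco]
    rw [List.map_singleton] at *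
    push_cast [hcnt] at *
    omega


lemma count_upper (α ρ : ℝ) (h0 : 0 < α) (h1 : α < 1) (a m : ℕ) :
    (((List.range m).map fun r => upperWord α ρ (a + r)).count true : ℤ)
      = ⌊-ρ - (a : ℝ) * α⌋ - ⌊-ρ - ((a : ℝ) + m) * α⌋ := by
  have hfα : Int.fract α = α := Int.fract_eq_self.2 ⟨h0.le, h1⟩
  have hfnα : Int.fract (-α) = 1 - α := by
    rw [Int.fract_neg (by rw [hfα]; exact ne_of_gt h0), hfα]
  have hflα : ⌊α⌋ = 0 := by
    apply Int.floor_eq_iff.2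
    constructor <;> push_cast <;> linarith
  have hstep : ∀ n : ℕ, (if upperWord α ρ n = true then (1:ℤ) else 0)
      = ⌊-ρ - (n:ℝ) * α⌋ - ⌊-ρ - ((n:ℝ) + 1) * α⌋ := by
    intro n
    have hfl := floor_step (-ρ - ((n:ℝ) + 1) * α) α
    rw [show -ρ - ((n:ℝ) + 1) * α + α = -ρ - (n:ℝ) * α by ring, hflα, hfα] at hfl
    rw [hfl]
    have hdec : Int.fract (-ρ - ((n:ℝ) + 1) * α)
        = Int.fract (Int.fract (-ρ - (n:ℝ) * α) + (1 - α)) := by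
      rw [show -ρ - ((n:ℝ) + 1) * α = (-ρ - (n:ℝ) * α) + -α by ring, fract_add_eq, hfnα]
    have hup : upperWord α ρ n = true ↔ Int.fract (-ρ - (n:ℝ) * α) < α := by
      rw [upperWord]
      have hfr : fract' (ρ + (n:ℝ) * α) = 1 - Int.fract (-ρ - (n:ℝ) * α) := by
        rw [fract']
        congr 2
        ring_nf
      rw [hfr]
      constructor
      · intro hcon
        split at hcon
        · next hl => linarith
        · exact absurd hcon (by simp)
      · intro hl
        rw [if_pos (by linarith)]
    have hh0 := Int.fract_nonneg (-ρ - (n:ℝ) * α)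
    have hh1 := Int.fract_lt_one (-ρ - (n:ℝ) * α)
    rcases lt_or_ge (Int.fract (-ρ - (n:ℝ) * α)) α with hca | hca
    · have hval : Int.fract (-ρ - ((n:ℝ) + 1) * α)
          = Int.fract (-ρ - (n:ℝ) * α) + (1 - α) := by
        rw [hdec]
        exact Int.fract_eq_self.2 ⟨by linarith, by linarith⟩
      rw [if_pos (hup.2 hca), if_pos (by rw [hval]; linarith)]
      norm_num
    · have hval : Int.fract (-ρ - ((n:ℝ) + 1) * α)
          = Int.fract (-ρ - (n:ℝ) * α) - α := by
        rw [hdec, show Int.fract (-ρ - (n:ℝ) * α) + (1 - α)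
            = (Int.fract (-ρ - (n:ℝ) * α) - α) + ((1:ℤ):ℝ) by push_cast; ring,
          Int.fract_add_intCast]
        exact Int.fract_eq_self.2 ⟨by linarith, by linarith⟩
      rw [if_neg (by rw [hup]; push_neg; exact hca),
        if_neg (by rw [hval]; push_neg; linarith)]
      norm_num
  induction m with
  | zero => simp
  | succ m ih =>
    rw [List.range_succ, List.map_append, List.count_append]
    push_cast
    rw [ih]
    have hs := hstep (a + m)
    rw [List.map_singleton]
    have hcnt : (([upperWord α ρ (a + m)].count true : ℤ))
        = (if upperWord α ρ (a + m) = true then (1:ℤ) else 0) := by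
      split
      · next hco => simp [hco]
      · next hco => simp [hco]
    rw [hcnt, hs]
    have e1 : -ρ - ((a + m : ℕ):ℝ) * α = -ρ - ((a:ℝ) + m) * α := by push_cast; ring
    have e2 : -ρ - (((a + m : ℕ):ℝ) + 1) * α = -ρ - ((a:ℝ) + (m + 1)) * α := by push_cast; ring
    rw [e1, e2]
    ring

lemma abelian_bound (α : ℝ) (h0 : 0 < α) (h1 : α < 1) (m e : ℕ) (u : List Bool)
    (hfac : IsFactor α u) (hpow : IsAbelianPower m e u) :
    (e : ℝ) * nint ((m : ℝ) * α) < 1 := by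
  obtain ⟨s, ⟨ρ, hρ0, hρ1, hconv⟩, i, hu⟩ := hfac
  obtain ⟨hm1, he2, hlen, hab⟩ := hpow
  have hu' : u = (List.range (e * m)).map fun j => s (i + j) := by rw [← hlen]; exact hu
  have hblock : ∀ j < e, (u.drop (j * m)).take m
      = (List.range m).map fun r => s (i + j * m + r) := by
    intro j hj
    rw [hu', window _ (e * m) (j * m) m
      (by calc j * m + m = (j + 1) * m := by ring
        _ ≤ e * m := Nat.mul_le_mul_right m (Nat.succ_le_of_lt hj))]
    have hfun : (fun r => s (i + (j * m + r))) = fun r => s (i + j * m + r) := by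
      funext r; rw [Nat.add_assoc]
    rw [hfun]
  have hcnteq : ∀ j < e, (((u.drop (j * m)).take m).count true : ℤ)
      = (((u.drop (0 * m)).take m).count true : ℤ) := by
    intro j hj
    have := (hab j hj 0 (by omega)).2
    exact_mod_cast this
  rcases hconv with rfl | rfl
  · -- lower convention
    have hformula : ∀ j < e, (((u.drop (j * m)).take m).count true : ℤ)
        = ⌊(ρ + (i:ℝ) * α) + ((j:ℝ) + 1) * ((m:ℝ) * α)⌋
          - ⌊(ρ + (i:ℝ) * α) + (j:ℝ) * ((m:ℝ) * α)⌋ := by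
      intro j hj
      rw [hblock j hj, count_lower α ρ h0 h1 (i + j * m) m]
      congr 2 <;> push_cast <;> ring
    have hc : ∀ j < e, ⌊(ρ + (i:ℝ) * α) + ((j:ℝ) + 1) * ((m:ℝ) * α)⌋
        - ⌊(ρ + (i:ℝ) * α) + (j:ℝ) * ((m:ℝ) * α)⌋
        = (((u.drop (0 * m)).take m).count true : ℤ) := by
      intro j hj
      rw [← hformula j hj]
      exact hcnteq j hj
    have hdr := drift (ρ + (i:ℝ) * α) ((m:ℝ) * α) e (by omega) _ hc
    simpa [nint] using hdr
  · -- upper convention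
    have hformula : ∀ j < e, (((u.drop (j * m)).take m).count true : ℤ)
        = ⌊-ρ - ((i + j * m : ℕ):ℝ) * α⌋ - ⌊-ρ - (((i + j * m : ℕ):ℝ) + m) * α⌋ := by
      intro j hj
      rw [hblock j hj, count_upper α ρ h0 h1 (i + j * m) m]
    have hc : ∀ j < e, ⌊(-ρ - (i:ℝ) * α - (e:ℝ) * ((m:ℝ) * α)) + ((j:ℝ) + 1) * ((m:ℝ) * α)⌋
        - ⌊(-ρ - (i:ℝ) * α - (e:ℝ) * ((m:ℝ) * α)) + (j:ℝ) * ((m:ℝ) * α)⌋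
        = (((u.drop (0 * m)).take m).count true : ℤ) := by
      intro j hj
      have hj' : e - 1 - j < e := by omega
      have hcastj : ((e - 1 - j : ℕ):ℝ) = (e:ℝ) - 1 - (j:ℝ) := by
        have h' : e - 1 - j = e - (j + 1) := by omega
        rw [h', Nat.cast_sub (by omega)]
        push_cast
        ring
      have hA : (-ρ - (i:ℝ) * α - (e:ℝ) * ((m:ℝ) * α)) + ((j:ℝ) + 1) * ((m:ℝ) * α)
          = -ρ - ((i + (e - 1 - j) * m : ℕ):ℝ) * α := by
        push_cast [hcastj]
        ring
      have hB : (-ρ - (i:ℝ) * α - (e:ℝ) * ((m:ℝ) * α)) + (j:ℝ) * ((m:ℝ) * α)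
          = -ρ - (((i + (e - 1 - j) * m : ℕ):ℝ) + m) * α := by
        push_cast [hcastj]
        ring
      rw [hA, hB, ← hformula (e - 1 - j) hj']
      exact hcnteq (e - 1 - j) hj'
    have hdr := drift (-ρ - (i:ℝ) * α - (e:ℝ) * ((m:ℝ) * α)) ((m:ℝ) * α) e (by omega) _ hc
    simpa [nint] using hdr


theorem relation_exponent_convergent_improved
    (α : ℝ) (hirr : Irrational α) (h0 : 0 < α) (h2 : α < 1 / 2)
    (k : ℕ) (hk : 2 ≤ k) (m : ℕ) (hm : 0 < m)
    (h : nint ((qd α (k - 1) : ℝ) * α) + ((pq α (k + 1) : ℝ) + 1) * nint ((qd α k : ℝ) * α)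
        ≤ nint ((m : ℝ) * α)) :
    ∀ e : ℕ, ∀ u : List Bool, IsFactor α u → IsAbelianPower m e u →
      (e : ℤ) < (qd α k : ℤ) - 1 := by
  intro e u hfac hpow
  have h1 : α < 1 := by linarith
  have hlt := abelian_bound α h0 h1 m e u hfac hpow
  have hk1 : k - 1 + 1 = k := by omega
  have hq1 : nint ((qd α (k - 1) : ℝ) * α) = bb α k := by
    rw [nint_qd hirr h0 h2 (k - 1), hk1]
  have hq2 : nint ((qd α k : ℝ) * α) = bb α (k + 1) := nint_qd hirr h0 h2 k
  rw [hq1, hq2] at h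
  have hbd := bound hirr h0 h2 k hk
  have hQ3 : (3 : ℝ) ≤ (qd α k : ℝ) := by
    obtain ⟨j, rfl⟩ : ∃ j, k = j + 2 := ⟨k - 2, by omega⟩
    exact_mod_cast qd_ge_three hirr h0 h2 j
  have hb1 := bb_pos hirr k
  have hb2 := bb_pos hirr (k + 1)
  have hpq0 : (0:ℝ) ≤ (pq α (k + 1) : ℝ) := Nat.cast_nonneg _
  have hpos : 0 < bb α k + ((pq α (k + 1) : ℝ) + 1) * bb α (k + 1) := by nlinarith
  have hnp : 0 < nint ((m : ℝ) * α) := lt_of_lt_of_le hpos h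
  have hge : 1 ≤ ((qd α k : ℝ) - 1) * nint ((m : ℝ) * α) :=
    le_trans hbd (mul_le_mul_of_nonneg_left h (by linarith))
  have hfin : (e : ℝ) < (qd α k : ℝ) - 1 :=
    (mul_lt_mul_iff_left₀ hnp).1 (lt_of_lt_of_le hlt hge)
  exact_mod_cast hfin


end SturmianAbelian
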